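/- For every positive integer k and every relational structure 𝔸, all k-cores of 𝔸 are isomorphic: if 𝔸' and 𝔸'' are both k-cores of 𝔸, then 𝔸' and 𝔸'' are isomorphic. -/
import Mathlib


/-- A relational structure over a vocabulary `σ` (with arity function `ar`)
on a carrier type `V`: a (finite) universe together with a relation for each
symbol, all of whose tuples take values in the universe. -/
structure Strc (σ : Type) (ar : σ → ℕ) (V : Type) where
  univ : Set V
  rel : ∀ R : σ, Set (Fin (ar R) → V)
  mem_univ : ∀ R, ∀ t ∈ rel R, ∀ i, t i ∈ univ

/-- `f` is a homomorphism from `A` to `B`: it maps the universe into the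
universe and every tuple of every relation to a tuple of the corresponding
relation. -/
def IsHom {σ : Type} {ar : σ → ℕ} {V W : Type}
    (A : Strc σ ar V) (B : Strc σ ar W) (f : V → W) : Prop :=
  Set.MapsTo f A.univ B.univ ∧ ∀ R, ∀ t ∈ A.rel R, (fun i => f (t i)) ∈ B.rel R

/-- `A` and `B` are homomorphically equivalent. -/
def HomEquiv {σ : Type} {ar : σ → ℕ} {V W : Type}
    (A : Strc σ ar V) (B : Strc σ ar W) : Prop :=
  (∃ f, IsHom A B f) ∧ ∃ g, IsHom B A g

/-- `A` is a substructure of `B` (both structures on the same ambient carrier):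
the universe is a subset and each relation is contained in the corresponding one. -/
def Substruct {σ : Type} {ar : σ → ℕ} {V : Type} (A B : Strc σ ar V) : Prop :=
  A.univ ⊆ B.univ ∧ ∀ R, A.rel R ⊆ B.rel R

/-- `A` is a proper substructure of `B`. -/
def ProperSubstruct {σ : Type} {ar : σ → ℕ} {V : Type} (A B : Strc σ ar V) : Prop :=
  Substruct A B ∧ A ≠ B

/-- `A` is a core: there is no homomorphism from `A` to a proper substructure of `A`. -/
def IsCore {σ : Type} {ar : σ → ℕ} {V : Type} (A : Strc σ ar V) : Prop :=
  ∀ A' : Strc σ ar V, ProperSubstruct A' A → ¬ ∃ f, IsHom A A' f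

/-- `A'` is a core of `A`: a substructure of `A` which is a core and to which
`A` has a homomorphism. -/
def IsCoreOf {σ : Type} {ar : σ → ℕ} {V : Type} (A' A : Strc σ ar V) : Prop :=
  Substruct A' A ∧ (∃ f, IsHom A A' f) ∧ IsCore A'

/-- `A` and `B` are isomorphic: there is a homomorphism `f` from `A` to `B`
which is a bijection between the universes and whose inverse is a homomorphism. -/
def Isomorphic {σ : Type} {ar : σ → ℕ} {V W : Type}
    (A : Strc σ ar V) (B : Strc σ ar W) : Prop :=
  ∃ f g, IsHom A B f ∧ IsHom B A g ∧ Set.BijOn f A.univ B.univ ∧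
    Set.InvOn g f A.univ B.univ

/-- The induced substructure `A[X]` (kept on the same ambient carrier):
its universe is `X` and its relations consist of those tuples of `A` all of
whose entries lie in `X`. -/
def Strc.induce {σ : Type} {ar : σ → ℕ} {V : Type} (A : Strc σ ar V) (X : Set V) :
    Strc σ ar V where
  univ := X
  rel := fun R => {t | t ∈ A.rel R ∧ ∀ i, t i ∈ X}
  mem_univ := fun _ _ ht i => ht.2 i

/-- A retraction of `A`: an endomorphism of `A` which is the identity on its
image. -/
def IsRetraction {σ : Type} {ar : σ → ℕ} {V : Type} (A : Strc σ ar V) (f : V → V) : Prop :=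
  IsHom A A f ∧ ∀ a ∈ A.univ, f (f a) = f a

/-- A `k`-retraction of `A`: a retraction moving at most `k` elements. -/
def IsKRetraction {σ : Type} {ar : σ → ℕ} {V : Type} (A : Strc σ ar V) (k : ℕ)
    (f : V → V) : Prop :=
  IsRetraction A f ∧ {a ∈ A.univ | f a ≠ a}.ncard ≤ k

/-- `A` is a `k`-core: its only `k`-retraction is the identity. -/
def IsKCoreStruct {σ : Type} {ar : σ → ℕ} {V : Type} (A : Strc σ ar V) (k : ℕ) : Prop :=
  ∀ f, IsKRetraction A k f → Set.EqOn f id A.univ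

/-- `A'` is a `k`-core of `A`: a `k`-core obtained from `A` by a finite
sequence of `k`-retractions, each applied to the induced substructure on the
image of the previous one. -/
def IsKCoreOf {σ : Type} {ar : σ → ℕ} {V : Type} (A' A : Strc σ ar V) (k : ℕ) : Prop :=
  IsKCoreStruct A' k ∧
    ∃ (m : ℕ) (S : ℕ → Strc σ ar V), S 0 = A ∧ S m = A' ∧
      ∀ i < m, ∃ f, IsKRetraction (S i) k f ∧
        S (i + 1) = (S i).induce (f '' (S i).univ)

section Aux

variable {σ V : Type} {ar : σ → ℕ}

lemma Strc.ext' {A B : Strc σ ar V} (h1 : A.univ = B.univ) (h2 : A.rel = B.rel) : A = B := by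
  cases A; cases B; simp_all

lemma induce_univ (A : Strc σ ar V) : A.induce A.univ = A := by
  refine Strc.ext' rfl ?_
  funext R
  ext t
  exact ⟨fun h => h.1, fun h => ⟨h, A.mem_univ R t h⟩⟩

lemma IsHom.comp {W X : Type} {A : Strc σ ar V} {B : Strc σ ar W} {C : Strc σ ar X}
    {f : V → W} {g : W → X} (hf : IsHom A B f) (hg : IsHom B C g) :
    IsHom A C (fun x => g (f x)) :=
  ⟨fun x hx => hg.1 (hf.1 hx), fun R t ht => hg.2 R _ (hf.2 R t ht)⟩

lemma IsHom.id (A : Strc σ ar V) : IsHom A A id :=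
  ⟨fun _ hx => hx, fun R t ht => ht⟩

lemma IsHom.iter {A : Strc σ ar V} {f : V → V} (hf : IsHom A A f) (n : ℕ) :
    IsHom A A f^[n] := by
  induction n with
  | zero => exact IsHom.id A
  | succ n ih =>
    refine ⟨fun x hx => ?_, fun R t ht => ?_⟩
    · rw [Function.iterate_succ_apply']
      exact hf.1 (ih.1 hx)
    · have := hf.2 R _ (ih.2 R t ht)
      simpa [Function.iterate_succ_apply'] using this

lemma iso_refl (A : Strc σ ar V) : Isomorphic A A :=
  ⟨id, id, IsHom.id A, IsHom.id A, Set.bijOn_id _, Set.invOn_id _⟩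

lemma iso_symm {W : Type} {A : Strc σ ar V} {B : Strc σ ar W} (h : Isomorphic A B) :
    Isomorphic B A := by
  obtain ⟨f, g, hf, hg, hbij, hinv⟩ := h
  exact ⟨g, f, hg, hf, hinv.symm.bijOn hg.1 hf.1, hinv.symm⟩

lemma iso_trans {W X : Type} {A : Strc σ ar V} {B : Strc σ ar W} {C : Strc σ ar X}
    (h1 : Isomorphic A B) (h2 : Isomorphic B C) : Isomorphic A C := by
  obtain ⟨f1, g1, hf1, hg1, hbij1, hinv1⟩ := h1
  obtain ⟨f2, g2, hf2, hg2, hbij2, hinv2⟩ := h2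
  refine ⟨fun x => f2 (f1 x), fun y => g1 (g2 y), hf1.comp hf2, hg2.comp hg1,
    hbij2.comp hbij1, ?_, ?_⟩
  · intro x hx
    have : g2 (f2 (f1 x)) = f1 x := hinv2.1 (hf1.1 hx)
    simp only [Function.comp_apply] at *
    rw [this]
    exact hinv1.1 hx
  · intro y hy
    have : f1 (g1 (g2 y)) = g2 y := hinv1.2 (hg2.1 hy)
    simp only [Function.comp_apply] at *
    rw [this]
    exact hinv2.2 hy

lemma exists_iter_idem [Finite V] (u : V → V) :
    ∃ N : ℕ, 0 < N ∧ ∀ x, u^[N] (u^[N] x) = u^[N] x := by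
  obtain ⟨i, j, hne, heq⟩ := Finite.exists_ne_map_eq_of_infinite (fun n : ℕ => u^[n])
  wlog hij : i < j generalizing i j
  · exact this j i hne.symm heq.symm (by omega)
  set p := j - i with hp
  have hp0 : 0 < p := by omega
  have hbase : u^[i + p] = u^[i] := by
    have : i + p = j := by omega
    rw [this, ← heq]
  have hstep : ∀ m, i ≤ m → u^[m + p] = u^[m] := by
    intro m hm
    obtain ⟨d, rfl⟩ := Nat.exists_eq_add_of_le hm
    calc u^[i + d + p] = u^[d + (i + p)] := by ring_nf
    _ = u^[d] ∘ u^[i + p] := Function.iterate_add u d (i + p)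
    _ = u^[d] ∘ u^[i] := by rw [hbase]
    _ = u^[d + i] := (Function.iterate_add u d i).symm
    _ = u^[i + d] := by ring_nf
  have hmul : ∀ c m, i ≤ m → u^[m + c * p] = u^[m] := by
    intro c
    induction c with
    | zero => simp
    | succ c ih =>
      intro m hm
      have : m + (c + 1) * p = (m + c * p) + p := by ring
      rw [this, hstep _ (by omega), ih m hm]
  refine ⟨(i + 1) * p, by positivity, fun x => ?_⟩
  have : u^[(i + 1) * p + (i + 1) * p] = u^[(i + 1) * p] := by
    apply hmul
    calc i ≤ i + 1 := by omega
    _ ≤ (i + 1) * p := Nat.le_mul_of_pos_right _ hp0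
  calc u^[(i + 1) * p] (u^[(i + 1) * p] x) = u^[(i + 1) * p + (i + 1) * p] x := by
        rw [Function.iterate_add_apply]
  _ = u^[(i + 1) * p] x := by rw [this]

end Aux
section Aux2

variable {σ V : Type} {ar : σ → ℕ}

lemma not_eqOn_iff {f : V → V} {s : Set V} :
    ¬ Set.EqOn f id s ↔ ∃ x ∈ s, f x ≠ x := by
  simp [Set.EqOn]

lemma retraction_image_ssubset {k : ℕ} {A : Strc σ ar V} {f : V → V}
    (h : IsKRetraction A k f) (hnid : ¬ Set.EqOn f id A.univ) :
    f '' A.univ ⊂ A.univ := by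
  obtain ⟨a, ha, hfa⟩ := not_eqOn_iff.1 hnid
  refine ⟨h.1.1.1.image_subset, fun hsub => ?_⟩
  obtain ⟨b, hb, hba⟩ := hsub ha
  apply hfa
  rw [← hba]
  exact h.1.2 b hb

lemma retraction_univ_lt [Finite V] {k : ℕ} {A : Strc σ ar V} {f : V → V}
    (h : IsKRetraction A k f) (hnid : ¬ Set.EqOn f id A.univ) :
    (f '' A.univ).ncard < A.univ.ncard :=
  Set.ncard_lt_ncard (retraction_image_ssubset h hnid) A.univ.toFinite

/-- Either a k-core equals the structure, or the sequence can be assumed to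
start with a non-identity k-retraction. -/
lemma kcore_step {k : ℕ} {E D : Strc σ ar V} (h : IsKCoreOf E D k) :
    E = D ∨ ∃ f, IsKRetraction D k f ∧ ¬ Set.EqOn f id D.univ ∧
      IsKCoreOf E (D.induce (f '' D.univ)) k := by
  obtain ⟨hc, m, S, h0, hm, hstep⟩ := h
  induction m generalizing S D with
  | zero => exact Or.inl (hm ▸ h0 ▸ rfl)
  | succ m ih =>
    obtain ⟨f, hf, h1⟩ := hstep 0 (Nat.succ_pos m)
    rw [h0] at hf h1
    by_cases hid : Set.EqOn f id D.univ
    · have himg : f '' D.univ = D.univ := hid.image_eq_self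
      have hS1 : S 1 = D := by rw [h1, himg, induce_univ]
      exact ih (fun i => S (i + 1)) hS1 hm (fun i hi => hstep (i + 1) (by omega))
    · exact Or.inr ⟨f, hf, hid, hc, m, fun i => S (i + 1), h1, hm,
        fun i hi => hstep (i + 1) (by omega)⟩

lemma kcore_prepend {k : ℕ} {E D : Strc σ ar V} {f : V → V}
    (hf : IsKRetraction D k f) (h : IsKCoreOf E (D.induce (f '' D.univ)) k) :
    IsKCoreOf E D k := by
  obtain ⟨hc, m, S, h0, hm, hstep⟩ := h
  refine ⟨hc, m + 1, fun i => Nat.rec D (fun j _ => S j) i, rfl, hm, ?_⟩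
  intro i hi
  cases i with
  | zero => exact ⟨f, hf, h0⟩
  | succ j => exact hstep j (by omega)

lemma exists_kcore_aux [Finite V] (k : ℕ) (n : ℕ) :
    ∀ D : Strc σ ar V, D.univ.ncard ≤ n → ∃ E, IsKCoreOf E D k := by
  induction n using Nat.strong_induction_on with
  | _ n ih =>
    intro D hD
    by_cases hc : IsKCoreStruct D k
    · exact ⟨D, hc, 0, fun _ => D, rfl, rfl, fun i hi => absurd hi (Nat.not_lt_zero i)⟩
    · have : ∃ f, IsKRetraction D k f ∧ ¬ Set.EqOn f id D.univ := by
        unfold IsKCoreStruct at hc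
        push_neg at hc
        exact hc
      obtain ⟨f, hf, hnid⟩ := this
      have hlt : (f '' D.univ).ncard < n :=
        lt_of_lt_of_le (retraction_univ_lt hf hnid) hD
      obtain ⟨E, hE⟩ := ih (f '' D.univ).ncard hlt (D.induce (f '' D.univ)) le_rfl
      exact ⟨E, kcore_prepend hf hE⟩

lemma exists_kcore [Finite V] (k : ℕ) (D : Strc σ ar V) : ∃ E, IsKCoreOf E D k :=
  exists_kcore_aux k D.univ.ncard D le_rfl

end Aux2
section Aux3

variable {σ V : Type} {ar : σ → ℕ}

/-- Transport a non-identity `k`-retraction across an isomorphism, obtaining a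
non-identity `k`-retraction on the other side together with an isomorphism of
the induced image structures. -/
lemma transport_retraction [Finite V] {k : ℕ} {D D' : Strc σ ar V}
    (hiso : Isomorphic D D') {g' : V → V} (hg' : IsKRetraction D' k g')
    (hnid : ¬ Set.EqOn g' id D'.univ) :
    ∃ g, IsKRetraction D k g ∧ ¬ Set.EqOn g id D.univ ∧
      Isomorphic (D.induce (g '' D.univ)) (D'.induce (g' '' D'.univ)) := by
  classical
  obtain ⟨θ, θ', hθ, hθ', hbij, hinv⟩ := hiso
  set g : V → V := fun x => if x ∈ D.univ then θ' (g' (θ x)) else x with hg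
  have hmem : ∀ x ∈ D.univ, g x = θ' (g' (θ x)) := fun x hx => by simp [hg, hx]
  have hgu : ∀ x ∈ D.univ, g x ∈ D.univ := fun x hx => by
    rw [hmem x hx]; exact hθ'.1 (hg'.1.1.1 (hθ.1 hx))
  -- g is a homomorphism
  have hhom : IsHom D D g := by
    refine ⟨hgu, fun R t ht => ?_⟩
    have h1 : (fun i => θ' (g' (θ (t i)))) ∈ D.rel R :=
      hθ'.2 R _ (hg'.1.1.2 R _ (hθ.2 R t ht))
    have : (fun i => g (t i)) = fun i => θ' (g' (θ (t i))) := by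
      funext i
      exact hmem _ (D.mem_univ R t ht i)
    rw [this]
    exact h1
  -- idempotent on the universe
  have hidem : ∀ a ∈ D.univ, g (g a) = g a := by
    intro a ha
    have h1 : g' (θ a) ∈ D'.univ := hg'.1.1.1 (hθ.1 ha)
    rw [hmem _ (hgu a ha), hmem a ha, hinv.2 h1, hg'.1.2 _ (hθ.1 ha)]
  -- moved set
  have hmoved : {a ∈ D.univ | g a ≠ a}.ncard ≤ k := by
    have hsub : θ '' {a ∈ D.univ | g a ≠ a} ⊆ {a ∈ D'.univ | g' a ≠ a} := by
      rintro _ ⟨a, ⟨ha, hga⟩, rfl⟩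
      refine ⟨hθ.1 ha, fun hfix => hga ?_⟩
      rw [hmem a ha, hfix]
      exact hinv.1 ha
    have hinj : Set.InjOn θ {a ∈ D.univ | g a ≠ a} :=
      hbij.injOn.mono (fun a ha => ha.1)
    calc {a ∈ D.univ | g a ≠ a}.ncard
        = (θ '' {a ∈ D.univ | g a ≠ a}).ncard := (Set.ncard_image_of_injOn hinj).symm
      _ ≤ {a ∈ D'.univ | g' a ≠ a}.ncard := Set.ncard_le_ncard hsub (Set.toFinite _)
      _ ≤ k := hg'.2
  have hret : IsKRetraction D k g := ⟨⟨hhom, hidem⟩, hmoved⟩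
  -- non-identity
  have hnid2 : ¬ Set.EqOn g id D.univ := by
    obtain ⟨c, hc, hgc⟩ := not_eqOn_iff.1 hnid
    rw [not_eqOn_iff]
    refine ⟨θ' c, hθ'.1 hc, ?_⟩
    have hθ'c : θ' c ∈ D.univ := hθ'.1 hc
    rw [hmem _ hθ'c, hinv.2 hc]
    intro heq
    apply hgc
    have h1 : g' c ∈ D'.univ := hg'.1.1.1 hc
    calc g' c = θ (θ' (g' c)) := (hinv.2 h1).symm
      _ = θ (θ' c) := by rw [heq]
      _ = c := hinv.2 hc
  -- isomorphism of image structures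
  have hCsub : g '' D.univ ⊆ D.univ := Set.image_subset_iff.2 (fun x hx => hgu x hx)
  have hC'sub : g' '' D'.univ ⊆ D'.univ := hg'.1.1.1.image_subset
  have hmapsθ : Set.MapsTo θ (g '' D.univ) (g' '' D'.univ) := by
    rintro _ ⟨a, ha, rfl⟩
    rw [hmem a ha, hinv.2 (hg'.1.1.1 (hθ.1 ha))]
    exact ⟨θ a, hθ.1 ha, rfl⟩
  have hmapsθ' : Set.MapsTo θ' (g' '' D'.univ) (g '' D.univ) := by
    rintro _ ⟨b, hb, rfl⟩
    refine ⟨θ' b, hθ'.1 hb, ?_⟩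
    rw [hmem _ (hθ'.1 hb), hinv.2 hb]
  refine ⟨g, hret, hnid2, θ, θ', ?_, ?_, ?_, ?_⟩
  · refine ⟨hmapsθ, fun R t ht => ?_⟩
    refine ⟨hθ.2 R t ht.1, fun i => hmapsθ (ht.2 i)⟩
  · refine ⟨hmapsθ', fun R t ht => ?_⟩
    refine ⟨hθ'.2 R t ht.1, fun i => hmapsθ' (ht.2 i)⟩
  · exact (hinv.mono hCsub hC'sub).bijOn hmapsθ hmapsθ'
  · exact hinv.mono hCsub hC'sub

end Aux3
section Aux4

variable {σ V : Type} {ar : σ → ℕ}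

lemma idem_iter {e : V → V} (he : ∀ x, e (e x) = e x) (n : ℕ) (x : V) :
    e^[n + 1] x = e x := by
  induction n generalizing x with
  | zero => rfl
  | succ n ih => rw [Function.iterate_succ_apply, ih (e x), he]

lemma iter_collapse {v : V → V} {a : ℕ} (hv : ∀ x, v^[a + 1] (v^[a + 1] x) = v^[a + 1] x)
    (b : ℕ) (x : V) : v^[(a + 1) * (b + 1)] x = v^[a + 1] x := by
  rw [Function.iterate_mul]
  exact idem_iter hv b x

lemma exists_common_idem [Finite V] (u w : V → V) :
    ∃ M : ℕ, (∀ x, u^[M + 1] (u^[M + 1] x) = u^[M + 1] x) ∧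
      (∀ x, w^[M + 1] (w^[M + 1] x) = w^[M + 1] x) := by
  obtain ⟨N1, hN1, hu⟩ := exists_iter_idem u
  obtain ⟨N2, hN2, hw⟩ := exists_iter_idem w
  obtain ⟨m, rfl⟩ : ∃ m, N1 = m + 1 := ⟨N1 - 1, by omega⟩
  obtain ⟨n, rfl⟩ : ∃ n, N2 = n + 1 := ⟨N2 - 1, by omega⟩
  have hpos : 0 < (m + 1) * (n + 1) := by positivity
  have h1 : (m + 1) * (n + 1) - 1 + 1 = (m + 1) * (n + 1) := by omega
  refine ⟨(m + 1) * (n + 1) - 1, ?_, ?_⟩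
  · intro x
    rw [h1]
    simp only [iter_collapse hu n]
    exact hu _
  · intro x
    have h2 : (m + 1) * (n + 1) = (n + 1) * (m + 1) := Nat.mul_comm _ _
    rw [h1, h2]
    simp only [iter_collapse hw m]
    exact hw _

lemma diamond [Finite V] {k : ℕ} {D : Strc σ ar V} {f g : V → V}
    (hf : IsKRetraction D k f) (hg : IsKRetraction D k g) :
    ∃ h h', IsKRetraction (D.induce (f '' D.univ)) k h ∧
      IsKRetraction (D.induce (g '' D.univ)) k h' ∧
      Isomorphic
        ((D.induce (f '' D.univ)).induce (h '' (D.induce (f '' D.univ)).univ))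
        ((D.induce (g '' D.univ)).induce (h' '' (D.induce (g '' D.univ)).univ)) := by
  set u : V → V := fun x => f (g x) with hu_def
  set w : V → V := fun x => g (f x) with hw_def
  obtain ⟨M, hu, hw⟩ := exists_common_idem u w
  set N := M + 1 with hN_def
  -- basic facts
  have hfm : Set.MapsTo f D.univ D.univ := hf.1.1.1
  have hgm : Set.MapsTo g D.univ D.univ := hg.1.1.1
  have ffix : ∀ x ∈ f '' D.univ, f x = x := by
    rintro _ ⟨a, ha, rfl⟩; exact hf.1.2 a ha
  have gfix : ∀ x ∈ g '' D.univ, g x = x := by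
    rintro _ ⟨a, ha, rfl⟩; exact hg.1.2 a ha
  have hu_hom : IsHom D D u := hg.1.1.comp hf.1.1
  have hw_hom : IsHom D D w := hf.1.1.comp hg.1.1
  -- conjugation identities
  have conj2 : ∀ m z, f (w^[m] z) = u^[m] (f z) := by
    intro m
    induction m with
    | zero => intro z; rfl
    | succ m ih =>
      intro z
      rw [Function.iterate_succ_apply, Function.iterate_succ_apply, ← ih (w z)]
  have conj2' : ∀ m z, g (u^[m] z) = w^[m] (g z) := by
    intro m
    induction m with
    | zero => intro z; rfl
    | succ m ih =>
      intro z
      rw [Function.iterate_succ_apply, Function.iterate_succ_apply, ← ih (u z)]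
  -- membership lemmas
  have mem_B : ∀ (m : ℕ), ∀ x ∈ D.univ, u^[m] (f x) ∈ f '' D.univ := by
    intro m
    induction m with
    | zero => intro x hx; exact ⟨x, hx, rfl⟩
    | succ m ih =>
      intro x hx
      rw [Function.iterate_succ_apply]
      have : u (f x) = f (g (f x)) := rfl
      rw [this]
      exact ih _ (hgm (hfm hx))
  have mem_C : ∀ (m : ℕ), ∀ x ∈ D.univ, w^[m] (g x) ∈ g '' D.univ := by
    intro m
    induction m with
    | zero => intro x hx; exact ⟨x, hx, rfl⟩
    | succ m ih =>
      intro x hx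
      rw [Function.iterate_succ_apply]
      have : w (g x) = g (f (g x)) := rfl
      rw [this]
      exact ih _ (hfm (hgm hx))
  have hBsub : f '' D.univ ⊆ D.univ := hfm.image_subset
  have hCsub : g '' D.univ ⊆ D.univ := hgm.image_subset
  set B := D.induce (f '' D.univ) with hB_def
  set C := D.induce (g '' D.univ) with hC_def
  have hBuniv : B.univ = f '' D.univ := rfl
  have hCuniv : C.univ = g '' D.univ := rfl
  -- h := u^[N] is a k-retraction of B
  have hmapsB : Set.MapsTo u^[N] B.univ B.univ := by
    rintro _ ⟨a, ha, rfl⟩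
    exact mem_B N a ha
  have hret1 : IsKRetraction B k u^[N] := by
    refine ⟨⟨⟨hmapsB, fun R t ht => ?_⟩, fun a _ => hu a⟩, ?_⟩
    · refine ⟨(hu_hom.iter N).2 R t ht.1, fun i => hmapsB (ht.2 i)⟩
    · refine le_trans (Set.ncard_le_ncard ?_ (Set.toFinite _)) hg.2
      rintro x ⟨hxB, hxne⟩
      refine ⟨hBsub hxB, fun hgx => hxne ?_⟩
      have hux : u x = x := by
        show f (g x) = x
        rw [hgx]
        exact ffix x hxB
      exact Function.iterate_fixed hux N
  have hmapsC : Set.MapsTo w^[N] C.univ C.univ := by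
    rintro _ ⟨a, ha, rfl⟩
    exact mem_C N a ha
  have hret2 : IsKRetraction C k w^[N] := by
    refine ⟨⟨⟨hmapsC, fun R t ht => ?_⟩, fun a _ => hw a⟩, ?_⟩
    · refine ⟨(hw_hom.iter N).2 R t ht.1, fun i => hmapsC (ht.2 i)⟩
    · refine le_trans (Set.ncard_le_ncard ?_ (Set.toFinite _)) hf.2
      rintro x ⟨hxC, hxne⟩
      refine ⟨hCsub hxC, fun hfx => hxne ?_⟩
      have hwx : w x = x := by
        show g (f x) = x
        rw [hfx]
        exact gfix x hxC
      exact Function.iterate_fixed hwx N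
  -- the isomorphism
  set DD := B.induce (u^[N] '' B.univ) with hDD_def
  set DD' := C.induce (w^[N] '' C.univ) with hDD'_def
  set ψ : V → V := fun y => u^[M] (f y) with hψ_def
  have hDDuniv : DD.univ = u^[N] '' B.univ := rfl
  have hDD'univ : DD'.univ = w^[N] '' C.univ := rfl
  have hmapsφ : Set.MapsTo g DD.univ DD'.univ := by
    rintro _ ⟨_, ⟨a, ha, rfl⟩, rfl⟩
    rw [conj2' N (f a)]
    exact ⟨g (f a), ⟨f a, hfm ha, rfl⟩, rfl⟩
  have hmapsψ : Set.MapsTo ψ DD'.univ DD.univ := by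
    rintro _ ⟨_, ⟨b, hb, rfl⟩, rfl⟩
    show u^[M] (f (w^[N] (g b))) ∈ u^[N] '' B.univ
    rw [conj2 N (g b)]
    have : u^[M] (u^[N] (f (g b))) = u^[N] (u^[M] (f (g b))) := by
      rw [← Function.iterate_add_apply, ← Function.iterate_add_apply, Nat.add_comm]
    rw [this]
    exact ⟨u^[M] (f (g b)), mem_B M _ (hgm hb), rfl⟩
  have hDDsub : DD.univ ⊆ B.univ := hmapsB.image_subset
  have hDD'sub : DD'.univ ⊆ C.univ := hmapsC.image_subset
  have hinvL : ∀ x ∈ DD.univ, ψ (g x) = x := by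
    rintro _ ⟨y, hy, rfl⟩
    show u^[M] (f (g (u^[N] y))) = u^[N] y
    have h1 : f (g (u^[N] y)) = u (u^[N] y) := rfl
    rw [h1, ← Function.iterate_succ_apply]
    show u^[N] (u^[N] y) = u^[N] y
    exact hu y
  have hinvR : ∀ y ∈ DD'.univ, g (ψ y) = y := by
    rintro _ ⟨z, hz, rfl⟩
    show g (u^[M] (f (w^[N] z))) = w^[N] z
    rw [conj2 N z, ← Function.iterate_add_apply, conj2' (M + N) (f z)]
    show w^[M + N] (w z) = w^[N] z
    rw [← Function.iterate_succ_apply]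
    show w^[M + N + 1] z = w^[N] z
    have hMN : M + N + 1 = N + N := by omega
    rw [hMN, Function.iterate_add_apply]
    exact hw z
  refine ⟨u^[N], w^[N], hret1, hret2, g, ψ, ?_, ?_,
    (Set.InvOn.bijOn ⟨hinvL, hinvR⟩ hmapsφ hmapsψ), ⟨hinvL, hinvR⟩⟩
  · refine ⟨hmapsφ, fun R t ht => ?_⟩
    exact ⟨⟨hg.1.1.2 R t ht.1.1, fun i => hDD'sub (hmapsφ (ht.2 i))⟩,
      fun i => hmapsφ (ht.2 i)⟩
  · refine ⟨hmapsψ, fun R t ht => ?_⟩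
    exact ⟨⟨(hf.1.1.comp (hu_hom.iter M)).2 R t ht.1.1,
      fun i => hDDsub (hmapsψ (ht.2 i))⟩, fun i => hmapsψ (ht.2 i)⟩

end Aux4
section Aux5

variable {σ V : Type} {ar : σ → ℕ}

lemma main_aux [Finite V] (k : ℕ) (n : ℕ) :
    ∀ D D' E E' : Strc σ ar V, D.univ.ncard ≤ n → Isomorphic D D' →
      IsKCoreOf E D k → IsKCoreOf E' D' k → Isomorphic E E' := by
  induction n using Nat.strong_induction_on with
  | _ n ih =>
    intro D D' E E' hn hiso hE hE'
    rcases kcore_step hE with rfl | ⟨f, hf, hfnid, hEB⟩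
    · rcases kcore_step hE' with rfl | ⟨g', hg', hg'nid, hE'C'⟩
      · exact hiso
      · obtain ⟨g, hg, hgnid, _⟩ := transport_retraction hiso hg' hg'nid
        exact absurd (hE.1 g hg) hgnid
    · rcases kcore_step hE' with rfl | ⟨g', hg', hg'nid, hE'C'⟩
      · obtain ⟨f', hf', hf'nid, _⟩ := transport_retraction (iso_symm hiso) hf hfnid
        exact absurd (hE'.1 f' hf') hf'nid
      · obtain ⟨g, hg, hgnid, hCC'⟩ := transport_retraction hiso hg' hg'nid
        obtain ⟨h, h', hh, hh', hDDiso⟩ := diamond hf hg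
        set B := D.induce (f '' D.univ) with hB_def
        set C := D.induce (g '' D.univ) with hC_def
        obtain ⟨F, hF⟩ := exists_kcore k (B.induce (h '' B.univ))
        obtain ⟨F', hF'⟩ := exists_kcore k (C.induce (h' '' C.univ))
        have hBlt : B.univ.ncard < n := lt_of_lt_of_le (retraction_univ_lt hf hfnid) hn
        have hClt : C.univ.ncard < n := lt_of_lt_of_le (retraction_univ_lt hg hgnid) hn
        have hDDle : (B.induce (h '' B.univ)).univ.ncard ≤ B.univ.ncard :=
          Set.ncard_le_ncard hh.1.1.1.image_subset (Set.toFinite _)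
        have h1 : Isomorphic E F :=
          ih B.univ.ncard hBlt B B E F le_rfl (iso_refl B) hEB (kcore_prepend hh hF)
        have h2 : Isomorphic F F' :=
          ih (B.induce (h '' B.univ)).univ.ncard (lt_of_le_of_lt hDDle hBlt)
            _ _ F F' le_rfl hDDiso hF hF'
        have h3 : Isomorphic F' E' :=
          ih C.univ.ncard hClt C (D'.induce (g' '' D'.univ)) F' E' le_rfl hCC'
            (kcore_prepend hh' hF') hE'C'
        exact iso_trans h1 (iso_trans h2 h3)

end Aux5
/-- for every positive integer `k`, all `k`-cores of a (finite)
relational structure are isomorphic. -/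
theorem kCores_isomorphic {σ V : Type} [Finite σ] [Finite V] {ar : σ → ℕ}
    (k : ℕ) (hk : 0 < k) (𝔸 𝔸' 𝔸'' : Strc σ ar V)
    (h' : IsKCoreOf 𝔸' 𝔸 k) (h'' : IsKCoreOf 𝔸'' 𝔸 k) :
    Isomorphic 𝔸' 𝔸'' :=
  main_aux k 𝔸.univ.ncard 𝔸 𝔸 𝔸' 𝔸'' le_rfl (iso_refl 𝔸) h' h''
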